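/- Let Ω ⊆ ℝⁿ be a Borel set and c > 0 a constant such that for every partition of Ω into three disjoint Borel sets Ω₁, Ω₂, Ω₃ with Ω₁ ∪ Ω₂ ∪ Ω₃ = Ω, one has vol(Ω₃) ≥ c · d(Ω₁, Ω₂) · min(vol(Ω₁), vol(Ω₂)). Let g : ℝⁿ → ℝⁿ be injective on Ω, L-Lipschitz on Ω, and measure-preserving on Ω (vol(g(S)) = vol(S) for every Borel S ⊆ Ω), and set Ω' = g(Ω). Then for every partition of Ω' into three disjoint Borel sets Ω₁', Ω₂', Ω₃' with Ω₁' ∪ Ω₂' ∪ Ω₃' = Ω', one has vol(Ω₃') ≥ (c/L) · d(Ω₁', Ω₂') · min(vol(Ω₁'), vol(Ω₂')). -/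

import Mathlib

open MeasureTheory Metric Set

/-- Distance between two sets: `d(A,B) = inf { |x - y| : x ∈ A, y ∈ B }`. -/
noncomputable def setDist {n : ℕ} (A B : Set (EuclideanSpace ℝ (Fin n))) : ℝ :=
  sInf {r : ℝ | ∃ x ∈ A, ∃ y ∈ B, r = dist x y}

lemma setDist_nonneg {n : ℕ} (A B : Set (EuclideanSpace ℝ (Fin n))) :
    0 ≤ setDist A B := by
  apply Real.sInf_nonneg
  rintro r ⟨x, _, y, _, rfl⟩
  exact dist_nonneg

/-- an isoperimetric inequality with constant `c` transfers, through an
injective `L`-Lipschitz measure-preserving map `g`, to the image `Ω' = g(Ω)` with the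
constant `c/L`. -/
theorem isoperimetry_transfer (n : ℕ)
    (Ω : Set (EuclideanSpace ℝ (Fin n))) (hΩ : MeasurableSet Ω)
    (c : ℝ) (hc : 0 < c)
    (hiso : ∀ Ω₁ Ω₂ Ω₃ : Set (EuclideanSpace ℝ (Fin n)),
      MeasurableSet Ω₁ → MeasurableSet Ω₂ → MeasurableSet Ω₃ →
      Disjoint Ω₁ Ω₂ → Disjoint Ω₁ Ω₃ → Disjoint Ω₂ Ω₃ →
      Ω₁ ∪ Ω₂ ∪ Ω₃ = Ω →
      ENNReal.ofReal (c * setDist Ω₁ Ω₂) * min (volume Ω₁) (volume Ω₂) ≤ volume Ω₃)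
    (L : ℝ)
    (g : EuclideanSpace ℝ (Fin n) → EuclideanSpace ℝ (Fin n))
    (hinj : Set.InjOn g Ω)
    (hlip : ∀ x ∈ Ω, ∀ y ∈ Ω, dist (g x) (g y) ≤ L * dist x y)
    (hmp : ∀ S ⊆ Ω, MeasurableSet S → volume (g '' S) = volume S)
    (Ω' : Set (EuclideanSpace ℝ (Fin n))) (hΩ' : Ω' = g '' Ω) :
    ∀ Ω₁' Ω₂' Ω₃' : Set (EuclideanSpace ℝ (Fin n)),
      MeasurableSet Ω₁' → MeasurableSet Ω₂' → MeasurableSet Ω₃' →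
      Disjoint Ω₁' Ω₂' → Disjoint Ω₁' Ω₃' → Disjoint Ω₂' Ω₃' →
      Ω₁' ∪ Ω₂' ∪ Ω₃' = Ω' →
      ENNReal.ofReal ((c / L) * setDist Ω₁' Ω₂') * min (volume Ω₁') (volume Ω₂') ≤
        volume Ω₃' := by
  intro Ω₁' Ω₂' Ω₃' h₁m h₂m h₃m h₁₂ h₁₃ h₂₃ hun
  by_cases hL : L ≤ 0
  · have h0 : (c / L) * setDist Ω₁' Ω₂' ≤ 0 := by
      apply mul_nonpos_of_nonpos_of_nonneg
      · exact div_nonpos_of_nonneg_of_nonpos hc.le hL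
      · exact setDist_nonneg _ _
    rw [ENNReal.ofReal_eq_zero.mpr h0, zero_mul]
    exact zero_le
  push_neg at hL
  by_cases h1e : Ω₁' = ∅
  · simp [h1e]
  by_cases h2e : Ω₂' = ∅
  · simp [h2e]
  -- pullbacks
  set Ω₁ := Ω ∩ g ⁻¹' Ω₁' with hΩ₁
  set Ω₂ := Ω ∩ g ⁻¹' Ω₂' with hΩ₂
  set Ω₃ := Ω ∩ g ⁻¹' Ω₃' with hΩ₃
  -- measurability of pullbacks
  have hcont : Continuous fun x : Ω => g x := by
    refine LipschitzWith.continuous (K := ⟨L, hL.le⟩) ?_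
    apply LipschitzWith.of_dist_le_mul
    intro x y
    exact hlip x x.2 y y.2
  have key : ∀ A : Set (EuclideanSpace ℝ (Fin n)), MeasurableSet A →
      MeasurableSet (Ω ∩ g ⁻¹' A) := by
    intro A hA
    have heq : Ω ∩ g ⁻¹' A = Subtype.val '' ((fun x : Ω => g x) ⁻¹' A) := by
      ext x
      constructor
      · rintro ⟨hxΩ, hxA⟩
        exact ⟨⟨x, hxΩ⟩, hxA, rfl⟩
      · rintro ⟨⟨y, hyΩ⟩, hyA, rfl⟩
        exact ⟨hyΩ, hyA⟩
    rw [heq]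
    exact (MeasurableEmbedding.subtype_coe hΩ).measurableSet_image.mpr
      (hcont.measurable hA)
  -- images of pullbacks
  have himg : ∀ A : Set (EuclideanSpace ℝ (Fin n)), A ⊆ Ω' →
      g '' (Ω ∩ g ⁻¹' A) = A := by
    intro A hA
    rw [Set.image_inter_preimage, ← hΩ', Set.inter_eq_self_of_subset_right hA]
  have h1s : Ω₁' ⊆ Ω' := hun ▸ (subset_union_left.trans subset_union_left)
  have h2s : Ω₂' ⊆ Ω' := hun ▸ ((subset_union_right (s := Ω₁')).trans subset_union_left)
  have h3s : Ω₃' ⊆ Ω' := hun ▸ subset_union_right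
  -- volumes of pullbacks
  have hv : ∀ A : Set (EuclideanSpace ℝ (Fin n)), A ⊆ Ω' → MeasurableSet A →
      volume A = volume (Ω ∩ g ⁻¹' A) := by
    intro A hA hAm
    calc volume A = volume (g '' (Ω ∩ g ⁻¹' A)) := by rw [himg A hA]
      _ = volume (Ω ∩ g ⁻¹' A) := hmp _ inter_subset_left (key A hAm)
  have hv₁ := hv Ω₁' h1s h₁m
  have hv₂ := hv Ω₂' h2s h₂m
  have hv₃ := hv Ω₃' h3s h₃m
  -- disjointness of pullbacks
  have hdisj : ∀ A B : Set (EuclideanSpace ℝ (Fin n)), Disjoint A B →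
      Disjoint (Ω ∩ g ⁻¹' A) (Ω ∩ g ⁻¹' B) := by
    intro A B hAB
    rw [Set.disjoint_left]
    rintro x ⟨_, hxA⟩ ⟨_, hxB⟩
    exact Set.disjoint_left.mp hAB hxA hxB
  -- union of pullbacks
  have huni : Ω₁ ∪ Ω₂ ∪ Ω₃ = Ω := by
    ext x
    constructor
    · rintro ((⟨h, _⟩ | ⟨h, _⟩) | ⟨h, _⟩) <;> exact h
    · intro hx
      have : g x ∈ Ω' := hΩ' ▸ ⟨x, hx, rfl⟩
      rw [← hun] at this
      rcases this with (h | h) | h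
      · exact Or.inl (Or.inl ⟨hx, h⟩)
      · exact Or.inl (Or.inr ⟨hx, h⟩)
      · exact Or.inr ⟨hx, h⟩
  -- nonemptiness
  have hne : ∀ A : Set (EuclideanSpace ℝ (Fin n)), A ⊆ Ω' → A ≠ ∅ →
      (Ω ∩ g ⁻¹' A).Nonempty := by
    intro A hA hAne
    obtain ⟨y, hy⟩ := Set.nonempty_iff_ne_empty.mpr hAne
    obtain ⟨x, hxΩ, rfl⟩ := hΩ' ▸ hA hy
    exact ⟨x, hxΩ, hy⟩
  obtain ⟨x₁, hx₁⟩ := hne Ω₁' h1s h1e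
  obtain ⟨x₂, hx₂⟩ := hne Ω₂' h2s h2e
  -- distance comparison
  have hd : setDist Ω₁' Ω₂' / L ≤ setDist Ω₁ Ω₂ := by
    have hmem : dist x₁ x₂ ∈ {r : ℝ | ∃ x ∈ Ω₁, ∃ y ∈ Ω₂, r = dist x y} :=
      ⟨x₁, hx₁, x₂, hx₂, rfl⟩
    apply le_csInf ⟨_, hmem⟩
    rintro r ⟨x, hx, y, hy, rfl⟩
    rw [div_le_iff₀ hL]
    have h1 : setDist Ω₁' Ω₂' ≤ dist (g x) (g y) := by
      have hmem' : dist (g x) (g y) ∈ {r : ℝ | ∃ a ∈ Ω₁', ∃ b ∈ Ω₂', r = dist a b} :=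
        ⟨g x, hx.2, g y, hy.2, rfl⟩
      refine csInf_le ⟨0, ?_⟩ hmem'
      rintro r ⟨a, _, b, _, rfl⟩
      exact dist_nonneg
    calc setDist Ω₁' Ω₂' ≤ dist (g x) (g y) := h1
      _ ≤ L * dist x y := hlip x hx.1 y hy.1
      _ = dist x y * L := mul_comm _ _
  have hcd : (c / L) * setDist Ω₁' Ω₂' ≤ c * setDist Ω₁ Ω₂ := by
    rw [div_mul_eq_mul_div, mul_div_assoc]
    exact mul_le_mul_of_nonneg_left hd hc.le
  calc ENNReal.ofReal ((c / L) * setDist Ω₁' Ω₂') * min (volume Ω₁') (volume Ω₂')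
      = ENNReal.ofReal ((c / L) * setDist Ω₁' Ω₂') * min (volume Ω₁) (volume Ω₂) := by
        rw [hv₁, hv₂]
    _ ≤ ENNReal.ofReal (c * setDist Ω₁ Ω₂) * min (volume Ω₁) (volume Ω₂) :=
        mul_le_mul_left (ENNReal.ofReal_le_ofReal hcd) _
    _ ≤ volume Ω₃ := hiso Ω₁ Ω₂ Ω₃ (key _ h₁m) (key _ h₂m) (key _ h₃m)
        (hdisj _ _ h₁₂) (hdisj _ _ h₁₃) (hdisj _ _ h₂₃) huni
    _ = volume Ω₃' := hv₃.symm
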